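/- arXiv:2210.16664 — 2 statements merged into one kernel-verified Lean document; each statement's English description precedes it below -/
import Mathlib

section
/- Let ‖·‖ be a norm on ℝⁿ whose square Φ(x) = ‖x‖² is continuously differentiable. Then Φ satisfies Φ(x+h) ≤ Φ(x) + ⟨∇Φ(x), h⟩ + κΦ(h) for all x, h ∈ ℝⁿ if and only if ∇Φ is Lipschitz continuous with constant 2κ with respect to the norm pair (‖·‖, ‖·‖_*), i.e., ‖∇Φ(x) − ∇Φ(y)‖_* ≤ 2κ‖x − y‖ for all x, y. -/
open scoped RealInnerProductSpace
open Real Matrix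

/-- `N` is a norm on the real vector space `E`. -/
def IsNorm {E : Type*} [AddCommGroup E] [Module ℝ E] (N : E → ℝ) : Prop :=
  (∀ x, 0 ≤ N x) ∧ (∀ x, N x = 0 ↔ x = 0) ∧
    (∀ (c : ℝ) (x), N (c • x) = |c| * N x) ∧ ∀ x y, N (x + y) ≤ N x + N y

/-- The conjugate (dual) norm of `N`: `‖y‖_* = sup {⟨y,x⟩ : N x ≤ 1}`. -/
noncomputable def dualNorm {E : Type*} [NormedAddCommGroup E] [InnerProductSpace ℝ E]
    (N : E → ℝ) (y : E) : ℝ :=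
  sSup {r | ∃ x, N x ≤ 1 ∧ r = ⟪y, x⟫}

/-- `N` is a `κ`-smooth norm: its square `Φ` is `C¹` and satisfies
`Φ(x+h) ≤ Φ(x) + ⟨∇Φ(x),h⟩ + κ Φ(h)`. -/
def IsSmoothNorm {E : Type*} [NormedAddCommGroup E] [InnerProductSpace ℝ E] [CompleteSpace E]
    (κ : ℝ) (N : E → ℝ) : Prop :=
  IsNorm N ∧ ContDiff ℝ 1 (fun x => N x ^ 2) ∧
    ∀ x h, N (x + h) ^ 2 ≤
      N x ^ 2 + ⟪gradient (fun z => N z ^ 2) x, h⟫ + κ * N h ^ 2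

/-- `N` is a `(κ,ς)`-regular norm: within factor `ς` of a `κ`-smooth norm. -/
def IsRegularNorm {E : Type*} [NormedAddCommGroup E] [InnerProductSpace ℝ E] [CompleteSpace E]
    (κ ς : ℝ) (N : E → ℝ) : Prop :=
  ∃ M : E → ℝ, IsSmoothNorm κ M ∧ ∀ x, ς⁻¹ * M x ≤ N x ∧ N x ≤ ς * M x

section helpers
variable {n : ℕ} {N : EuclideanSpace ℝ (Fin n) → ℝ}

lemma IsNorm.zero' (hN : IsNorm N) : N 0 = 0 := (hN.2.1 0).2 rfl

lemma IsNorm.neg' (hN : IsNorm N) (x : EuclideanSpace ℝ (Fin n)) : N (-x) = N x := by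
  have := hN.2.2.1 (-1) x; simpa using this

lemma IsNorm.sum_le' (hN : IsNorm N) {ι : Type*} (s : Finset ι)
    (f : ι → EuclideanSpace ℝ (Fin n)) : N (∑ i ∈ s, f i) ≤ ∑ i ∈ s, N (f i) := by
  classical
  induction s using Finset.induction with
  | empty => simp [hN.zero']
  | insert _ _ hx ih =>
      rw [Finset.sum_insert hx, Finset.sum_insert hx]
      exact (hN.2.2.2 _ _).trans (by linarith)

lemma IsNorm.le_const_mul (hN : IsNorm N) :
    ∃ C > 0, ∀ x, N x ≤ C * ‖x‖ := by
  refine ⟨(∑ i, N (EuclideanSpace.single i 1)) + 1,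
    add_pos_of_nonneg_of_pos (Finset.sum_nonneg fun i _ => hN.1 _) one_pos, fun x => ?_⟩
  have hx : x = ∑ i, x i • EuclideanSpace.single i (1:ℝ) := by
    have := (EuclideanSpace.basisFun (Fin n) ℝ).sum_repr x
    simp only [EuclideanSpace.basisFun_repr, EuclideanSpace.basisFun_apply] at this
    exact this.symm
  calc N x ≤ ∑ i, N (x i • EuclideanSpace.single i (1:ℝ)) := by
        conv_lhs => rw [hx]
        exact hN.sum_le' _ _
    _ = ∑ i, |x i| * N (EuclideanSpace.single i (1:ℝ)) := by
        simp [hN.2.2.1]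
    _ ≤ ∑ i, ‖x‖ * N (EuclideanSpace.single i (1:ℝ)) := by
        refine Finset.sum_le_sum fun i _ => ?_
        refine mul_le_mul_of_nonneg_right ?_ (hN.1 _)
        calc |x i| = |⟪EuclideanSpace.single i (1:ℝ), x⟫| := by
              rw [EuclideanSpace.inner_single_left]; simp
          _ ≤ ‖EuclideanSpace.single i (1:ℝ)‖ * ‖x‖ := abs_real_inner_le_norm _ _
          _ = ‖x‖ := by rw [EuclideanSpace.norm_single]; simp
    _ = (∑ i, N (EuclideanSpace.single i 1)) * ‖x‖ := by
        rw [← Finset.mul_sum, mul_comm]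
    _ ≤ ((∑ i, N (EuclideanSpace.single i 1)) + 1) * ‖x‖ := by
        have : (0:ℝ) ≤ ‖x‖ := norm_nonneg x
        nlinarith

lemma IsNorm.continuous' (hN : IsNorm N) : Continuous N := by
  obtain ⟨C, hC, hle⟩ := hN.le_const_mul
  rw [Metric.continuous_iff]
  intro x ε hε
  refine ⟨ε / C, by positivity, fun y hy => ?_⟩
  have h1 : N y ≤ N x + N (y - x) := by
    have := hN.2.2.2 x (y - x); simpa using this
  have h2 : N x ≤ N y + N (x - y) := by
    have := hN.2.2.2 y (x - y); simpa using this
  have h3 : N (y - x) ≤ C * ‖y - x‖ := hle _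
  have h4 : N (x - y) ≤ C * ‖x - y‖ := hle _
  rw [Real.dist_eq]
  rw [dist_eq_norm] at hy
  have h5 : ‖x - y‖ = ‖y - x‖ := by rw [norm_sub_rev]
  have hy2 : C * ‖y - x‖ < ε := by
    rw [mul_comm]; exact (lt_div_iff₀ hC).mp hy
  rw [abs_sub_lt_iff]
  constructor <;> nlinarith

lemma IsNorm.const_mul_le (hN : IsNorm N) :
    ∃ c > 0, ∀ x, c * ‖x‖ ≤ N x := by
  by_cases hs : (Metric.sphere (0 : EuclideanSpace ℝ (Fin n)) 1).Nonempty
  · obtain ⟨x₀, hx₀, hmin⟩ :=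
      (isCompact_sphere (0 : EuclideanSpace ℝ (Fin n)) 1).exists_isMinOn hs
        hN.continuous'.continuousOn
    have hx₀n : ‖x₀‖ = 1 := by simpa using mem_sphere_iff_norm.mp hx₀
    have hx₀0 : x₀ ≠ 0 := fun h => by simp [h] at hx₀n
    have hc : 0 < N x₀ := lt_of_le_of_ne (hN.1 _) fun h => hx₀0 ((hN.2.1 _).mp h.symm)
    refine ⟨N x₀, hc, fun x => ?_⟩
    rcases eq_or_ne x 0 with rfl | hx
    · simp [hN.zero']
    · have hxn : (0:ℝ) < ‖x‖ := norm_pos_iff.mpr hx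
      have hmem : ‖x‖⁻¹ • x ∈ Metric.sphere (0 : EuclideanSpace ℝ (Fin n)) 1 := by
        simp [norm_smul, abs_of_pos (inv_pos.mpr hxn), inv_mul_cancel₀ hxn.ne']
      have h6 : N x₀ ≤ N (‖x‖⁻¹ • x) := hmin hmem
      have heq : N (‖x‖⁻¹ • x) = ‖x‖⁻¹ * N x := by
        rw [hN.2.2.1]; rw [abs_of_pos (inv_pos.mpr hxn)]
      rw [heq] at h6
      calc N x₀ * ‖x‖ ≤ (‖x‖⁻¹ * N x) * ‖x‖ :=
            mul_le_mul_of_nonneg_right h6 hxn.le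
        _ = N x := by
            rw [mul_comm (‖x‖⁻¹) (N x), mul_assoc, inv_mul_cancel₀ hxn.ne', mul_one]
  · refine ⟨1, one_pos, fun x => ?_⟩
    rcases eq_or_ne x 0 with rfl | hx
    · simp [hN.zero']
    · exact absurd ⟨‖x‖⁻¹ • x, by
        simp [norm_smul, abs_of_pos (inv_pos.mpr (norm_pos_iff.mpr hx)),
          inv_mul_cancel₀ (norm_pos_iff.mpr hx).ne']⟩ hs



lemma dualNorm_bddAbove (hN : IsNorm N) (y : EuclideanSpace ℝ (Fin n)) :
    BddAbove {r | ∃ x, N x ≤ 1 ∧ r = ⟪y, x⟫} := by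
  obtain ⟨c, hc, hcle⟩ := hN.const_mul_le
  refine ⟨‖y‖ * c⁻¹, fun r hr => ?_⟩
  obtain ⟨x, hx1, rfl⟩ := hr
  have hxb : ‖x‖ ≤ c⁻¹ := by
    calc ‖x‖ = c⁻¹ * (c * ‖x‖) := by
          rw [← mul_assoc, inv_mul_cancel₀ hc.ne', one_mul]
      _ ≤ c⁻¹ * 1 := mul_le_mul_of_nonneg_left ((hcle x).trans hx1) (inv_pos.mpr hc).le
      _ = c⁻¹ := mul_one _
  calc ⟪y, x⟫ ≤ ‖y‖ * ‖x‖ := real_inner_le_norm y x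
    _ ≤ ‖y‖ * c⁻¹ := mul_le_mul_of_nonneg_left hxb (norm_nonneg y)

lemma dualNorm_nonneg' (hN : IsNorm N) (y : EuclideanSpace ℝ (Fin n)) :
    0 ≤ dualNorm N y :=
  le_csSup (dualNorm_bddAbove hN y) ⟨0, by simp [hN.zero']⟩

lemma dualNorm_inner_le (hN : IsNorm N) (y x : EuclideanSpace ℝ (Fin n)) :
    ⟪y, x⟫ ≤ dualNorm N y * N x := by
  rcases eq_or_ne x 0 with rfl | hx
  · simp [hN.zero']
  · have hNx : 0 < N x := lt_of_le_of_ne (hN.1 _) fun h => hx ((hN.2.1 _).mp h.symm)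
    have hmem : ⟪y, (N x)⁻¹ • x⟫ ∈ {r | ∃ z, N z ≤ 1 ∧ r = ⟪y, z⟫} := by
      refine ⟨(N x)⁻¹ • x, ?_, rfl⟩
      rw [hN.2.2.1, abs_of_pos (inv_pos.mpr hNx), inv_mul_cancel₀ hNx.ne']
    have hle := le_csSup (dualNorm_bddAbove hN y) hmem
    rw [real_inner_smul_right] at hle
    have := mul_le_mul_of_nonneg_right hle hNx.le
    rw [mul_comm ((N x)⁻¹) _, mul_assoc, inv_mul_cancel₀ hNx.ne', mul_one] at this
    exact this.trans_eq rfl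

lemma dualNorm_exists (hN : IsNorm N) (y : EuclideanSpace ℝ (Fin n)) :
    ∃ u, N u ≤ 1 ∧ dualNorm N y = ⟪y, u⟫ := by
  obtain ⟨c, hc, hcle⟩ := hN.const_mul_le
  have hK : IsCompact {x : EuclideanSpace ℝ (Fin n) | N x ≤ 1} := by
    refine Metric.isCompact_of_isClosed_isBounded
      (isClosed_le hN.continuous' continuous_const) ?_
    refine (Metric.isBounded_iff_subset_closedBall 0).mpr ⟨c⁻¹, fun x hx => ?_⟩
    simp only [Metric.mem_closedBall, dist_zero_right]
    have hx' : N x ≤ 1 := hx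
    calc ‖x‖ = c⁻¹ * (c * ‖x‖) := by
          rw [← mul_assoc, inv_mul_cancel₀ hc.ne', one_mul]
      _ ≤ c⁻¹ * 1 := mul_le_mul_of_nonneg_left ((hcle x).trans hx') (inv_pos.mpr hc).le
      _ = c⁻¹ := mul_one _
  have himg : {r | ∃ x, N x ≤ 1 ∧ r = ⟪y, x⟫} = (fun x => ⟪y, x⟫) '' {x | N x ≤ 1} := by
    ext r; constructor
    · rintro ⟨x, h1, rfl⟩; exact ⟨x, h1, rfl⟩
    · rintro ⟨x, h1, rfl⟩; exact ⟨x, h1, rfl⟩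
  have hKc : IsCompact ((fun x => ⟪y, x⟫) '' {x | N x ≤ 1}) :=
    hK.image (continuous_const.inner continuous_id)
  have hne : ((fun x => ⟪y, x⟫) '' {x : EuclideanSpace ℝ (Fin n) | N x ≤ 1}).Nonempty :=
    ⟨⟪y, 0⟫, 0, by simp [hN.zero'], rfl⟩
  have := hKc.sSup_mem hne
  rw [dualNorm, himg]
  obtain ⟨u, hu, huv⟩ := this
  exact ⟨u, hu, huv.symm⟩

lemma dualNorm_neg' (hN : IsNorm N) (y : EuclideanSpace ℝ (Fin n)) :
    dualNorm N (-y) = dualNorm N y := by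
  unfold dualNorm
  congr 1
  ext r
  constructor
  · rintro ⟨x, h1, rfl⟩
    exact ⟨-x, by rwa [hN.neg'], by simp [inner_neg_left, inner_neg_right]⟩
  · rintro ⟨x, h1, rfl⟩
    exact ⟨-x, by rwa [hN.neg'], by simp [inner_neg_left, inner_neg_right]⟩


lemma grad_continuous (hC : ContDiff ℝ 1 (fun x : EuclideanSpace ℝ (Fin n) => N x ^ 2)) :
    Continuous (fun x => gradient (fun z => N z ^ 2) x) := by
  have : (fun x => gradient (fun z => N z ^ 2) x)
      = fun x => (InnerProductSpace.toDual ℝ (EuclideanSpace ℝ (Fin n))).symm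
          (fderiv ℝ (fun z => N z ^ 2) x) := rfl
  rw [this]
  exact (LinearIsometryEquiv.continuous _).comp (hC.continuous_fderiv one_ne_zero)

lemma line_hasDerivAt (hC : ContDiff ℝ 1 (fun x : EuclideanSpace ℝ (Fin n) => N x ^ 2))
    (x v : EuclideanSpace ℝ (Fin n)) (t : ℝ) :
    HasDerivAt (fun s : ℝ => N (x + s • v) ^ 2)
      ⟪gradient (fun z => N z ^ 2) (x + t • v), v⟫ t := by
  have hdiff : DifferentiableAt ℝ (fun z => N z ^ 2) (x + t • v) :=
    (hC.differentiable one_ne_zero).differentiableAt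
  have hf := hdiff.hasGradientAt.hasFDerivAt
  have hline : HasDerivAt (fun s : ℝ => x + s • v) v t := by
    simpa using ((hasDerivAt_id t).smul_const v).const_add x
  have := hf.comp_hasDerivAt t hline
  convert this using 1
  all_goals rfl

lemma IsNorm.convexOn' (hN : IsNorm N) : ConvexOn ℝ Set.univ N := by
  refine ⟨convex_univ, fun x _ y _ a b ha hb _ => ?_⟩
  simp only [smul_eq_mul]
  calc N (a • x + b • y) ≤ N (a • x) + N (b • y) := hN.2.2.2 _ _
    _ = a * N x + b * N y := by
        rw [hN.2.2.1, hN.2.2.1, abs_of_nonneg ha, abs_of_nonneg hb]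

lemma sq_convexOn (hN : IsNorm N) :
    ConvexOn ℝ Set.univ (fun z : EuclideanSpace ℝ (Fin n) => N z ^ 2) := by
  refine ⟨convex_univ, fun x _ y _ a b ha hb hab => ?_⟩
  simp only [smul_eq_mul]
  have htri : N (a • x + b • y) ≤ a * N x + b * N y := by
    calc N (a • x + b • y) ≤ N (a • x) + N (b • y) := hN.2.2.2 _ _
      _ = a * N x + b * N y := by
          rw [hN.2.2.1, hN.2.2.1, abs_of_nonneg ha, abs_of_nonneg hb]
  have h0 : 0 ≤ N (a • x + b • y) := hN.1 _
  nlinarith [sq_nonneg (N x - N y), mul_nonneg ha hb, hN.1 x, hN.1 y]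

lemma smooth_support (hN : IsNorm N)
    (hC : ContDiff ℝ 1 (fun x : EuclideanSpace ℝ (Fin n) => N x ^ 2))
    (x z : EuclideanSpace ℝ (Fin n)) :
    N x ^ 2 + ⟪gradient (fun z => N z ^ 2) x, z - x⟫ ≤ N z ^ 2 := by
  set g : ℝ → ℝ := fun t => N (x + t • (z - x)) ^ 2 with hg
  have hconv : ConvexOn ℝ Set.univ g := by
    have := (sq_convexOn hN).comp_affineMap (AffineMap.lineMap x z)
    have heq : ((fun z : EuclideanSpace ℝ (Fin n) => N z ^ 2) ∘ (AffineMap.lineMap x z)) = g := by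
      ext t
      show N ((AffineMap.lineMap x z) t) ^ 2 = N (x + t • (z - x)) ^ 2
      rw [AffineMap.lineMap_apply_module]
      congr 2
      module
    rw [heq] at this
    simpa using this
  have hderiv : HasDerivAt g ⟪gradient (fun z => N z ^ 2) (x + (0:ℝ) • (z - x)), z - x⟫ 0 :=
    line_hasDerivAt hC x (z - x) 0
  have hslope := hconv.le_slope_of_hasDerivAt (Set.mem_univ 0) (Set.mem_univ 1) zero_lt_one hderiv
  rw [slope_def_field] at hslope
  simp only [zero_smul, add_zero, one_smul] at hslope hderiv ⊢
  have hg1 : g 1 = N z ^ 2 := by simp [hg]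
  have hg0 : g 0 = N x ^ 2 := by simp [hg]
  rw [hg1, hg0] at hslope
  have h2 : (N z ^ 2 - N x ^ 2) / (1 - 0) = N z ^ 2 - N x ^ 2 := by norm_num
  rw [h2] at hslope
  linarith


lemma bregman_lower {κ : ℝ} (hκ : 1 ≤ κ) (hN : IsNorm N)
    (hC : ContDiff ℝ 1 (fun x : EuclideanSpace ℝ (Fin n) => N x ^ 2))
    (hsm : ∀ x h, N (x + h) ^ 2 ≤
      N x ^ 2 + ⟪gradient (fun z => N z ^ 2) x, h⟫ + κ * N h ^ 2)
    (a b : EuclideanSpace ℝ (Fin n)) :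
    dualNorm N (gradient (fun z => N z ^ 2) b - gradient (fun z => N z ^ 2) a) ^ 2 / (4 * κ) ≤
      N b ^ 2 - N a ^ 2 - ⟪gradient (fun z => N z ^ 2) a, b - a⟫ := by
  have hκ0 : (0:ℝ) < κ := lt_of_lt_of_le one_pos hκ
  set ga := gradient (fun z => N z ^ 2) a
  set gb := gradient (fun z => N z ^ 2) b
  set D := dualNorm N (gb - ga) with hD
  obtain ⟨u, hu1, huD⟩ := dualNorm_exists hN (gb - ga)
  have hDnn : 0 ≤ D := dualNorm_nonneg' hN _
  set t : ℝ := D / (2 * κ) with ht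
  have htnn : 0 ≤ t := div_nonneg hDnn (by linarith)
  have h1 : N a ^ 2 + ⟪ga, (b - t • u) - a⟫ ≤ N (b - t • u) ^ 2 :=
    smooth_support hN hC a (b - t • u)
  have h2 : N (b + (-(t • u))) ^ 2 ≤
      N b ^ 2 + ⟪gb, -(t • u)⟫ + κ * N (-(t • u)) ^ 2 := hsm b _
  rw [← sub_eq_add_neg] at h2
  have hNu : N (-(t • u)) = t * N u := by
    rw [hN.neg', hN.2.2.1, abs_of_nonneg htnn]
  have hNu2 : κ * N (-(t • u)) ^ 2 ≤ κ * t ^ 2 := by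
    rw [hNu]
    have hNu1 : (N u) ^ 2 ≤ 1 := by nlinarith [hN.1 u]
    have h3 : (t * N u) ^ 2 ≤ t ^ 2 := by
      nlinarith [mul_nonneg (sq_nonneg t) (sub_nonneg.mpr hNu1)]
    nlinarith
  have hia : ⟪ga, (b - t • u) - a⟫ = ⟪ga, b - a⟫ - t * ⟪ga, u⟫ := by
    have : (b - t • u) - a = (b - a) - t • u := by module
    rw [this, inner_sub_right, real_inner_smul_right]
  have hib : ⟪gb, -(t • u)⟫ = -(t * ⟪gb, u⟫) := by
    rw [inner_neg_right, real_inner_smul_right]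
  have hwu : ⟪gb, u⟫ - ⟪ga, u⟫ = D := by
    rw [hD, huD, inner_sub_left]
  have key : t * D - κ * t ^ 2 ≤ N b ^ 2 - N a ^ 2 - ⟪ga, b - a⟫ := by
    rw [hia] at h1
    rw [hib] at h2
    nlinarith [h1.trans h2]
  have hval : t * D - κ * t ^ 2 = D ^ 2 / (4 * κ) := by
    rw [ht]; field_simp; ring
  linarith [hval ▸ key]

end helpers


set_option maxHeartbeats 1000000 in
/-- for a norm with continuously differentiable square `Φ`,
the inequality `Φ(x+h) ≤ Φ(x) + ⟨∇Φ(x),h⟩ + κΦ(h)` holds for all `x, h`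
iff `∇Φ` is Lipschitz with constant `2κ` w.r.t. the pair `(‖·‖, ‖·‖_*)`. -/
theorem stmt_2 {n : ℕ} (κ : ℝ) (hκ : 1 ≤ κ)
    (N : EuclideanSpace ℝ (Fin n) → ℝ) (hN : IsNorm N)
    (hC : ContDiff ℝ 1 (fun x => N x ^ 2)) :
    (∀ x h, N (x + h) ^ 2 ≤
        N x ^ 2 + ⟪gradient (fun z => N z ^ 2) x, h⟫ + κ * N h ^ 2) ↔
      (∀ x y, dualNorm N
          (gradient (fun z => N z ^ 2) x - gradient (fun z => N z ^ 2) y) ≤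
        2 * κ * N (x - y)) := by
  have hκ0 : (0:ℝ) < κ := lt_of_lt_of_le one_pos hκ
  constructor
  · -- smoothness → Lipschitz gradient
    intro hsm x y
    set gx := gradient (fun z => N z ^ 2) x with hgx
    set gy := gradient (fun z => N z ^ 2) y with hgy
    set D := dualNorm N (gx - gy) with hD
    have hDnn : 0 ≤ D := dualNorm_nonneg' hN _
    have h1 := bregman_lower hκ hN hC hsm x y
    have h2 := bregman_lower hκ hN hC hsm y x
    have hneg : dualNorm N (gy - gx) = D := by
      rw [hD, show gx - gy = -(gy - gx) by module, dualNorm_neg' hN]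
    rw [hneg] at h1
    have hcs : ⟪gx - gy, x - y⟫ ≤ D * N (x - y) := dualNorm_inner_le hN _ _
    have hin : ⟪gx - gy, x - y⟫ = -⟪gx, y - x⟫ - ⟪gy, x - y⟫ := by
      simp only [inner_sub_left, inner_sub_right]
      ring
    have hsum : D ^ 2 / (2 * κ) ≤ D * N (x - y) := by
      have : D ^ 2 / (4 * κ) + D ^ 2 / (4 * κ) = D ^ 2 / (2 * κ) := by
        field_simp; ring
      nlinarith [h1, h2, hcs, hin]
    rcases eq_or_lt_of_le hDnn with hD0 | hD0
    · rw [← hD0]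
      have := hN.1 (x - y)
      nlinarith
    · have h3 : D ^ 2 ≤ 2 * κ * (D * N (x - y)) := by
        rw [div_le_iff₀ (by linarith : (0:ℝ) < 2 * κ)] at hsum
        nlinarith [hsum]
      nlinarith [h3, hD0]
  · -- Lipschitz gradient → smoothness
    intro hlip x h
    set Φ := fun z : EuclideanSpace ℝ (Fin n) => N z ^ 2 with hΦ
    set G := fun z => gradient (fun z => N z ^ 2) z with hG
    have hGc : Continuous G := grad_continuous hC
    have hlc : Continuous fun t : ℝ => x + t • h :=
      continuous_const.add (continuous_id.smul continuous_const)
    have hgc : Continuous fun t : ℝ => ⟪G (x + t • h), h⟫ :=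
      (hGc.comp hlc).inner continuous_const
    have hftc : ∫ t in (0:ℝ)..1, ⟪G (x + t • h), h⟫ = Φ (x + h) - Φ x := by
      have := intervalIntegral.integral_eq_sub_of_hasDerivAt
        (f := fun s : ℝ => Φ (x + s • h))
        (f' := fun t : ℝ => ⟪G (x + t • h), h⟫)
        (fun t _ => line_hasDerivAt hC x h t)
        (hgc.intervalIntegrable 0 1)
      simpa using this
    have hmono : ∫ t in (0:ℝ)..1, ⟪G (x + t • h), h⟫ ≤
        ∫ t in (0:ℝ)..1, (⟪G x, h⟫ + 2 * κ * N h ^ 2 * t) := by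
      refine intervalIntegral.integral_mono_on zero_le_one
        (hgc.intervalIntegrable 0 1)
        ((continuous_const.add (continuous_const.mul continuous_id')).intervalIntegrable 0 1)
        (fun t ht => ?_)
      have hdn : ⟪G (x + t • h) - G x, h⟫ ≤
          dualNorm N (G (x + t • h) - G x) * N h := dualNorm_inner_le hN _ _
      have hl := hlip (x + t • h) x
      have hd : N ((x + t • h) - x) = t * N h := by
        rw [show (x + t • h) - x = t • h by module, hN.2.2.1, abs_of_nonneg ht.1]
      rw [hd] at hl
      have hm : dualNorm N (G (x + t • h) - G x) * N h ≤ (2 * κ * (t * N h)) * N h :=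
        mul_le_mul_of_nonneg_right hl (hN.1 h)
      have hsplit : ⟪G (x + t • h) - G x, h⟫ = ⟪G (x + t • h), h⟫ - ⟪G x, h⟫ := by
        rw [inner_sub_left]
      nlinarith [hdn.trans hm]
    have hrhs : ∫ t in (0:ℝ)..1, (⟪G x, h⟫ + 2 * κ * N h ^ 2 * t) =
        ⟪G x, h⟫ + κ * N h ^ 2 := by
      rw [intervalIntegral.integral_add (g := fun t => 2 * κ * N h ^ 2 * t) (intervalIntegrable_const)
        ((continuous_const.mul continuous_id').intervalIntegrable 0 1)]
      rw [intervalIntegral.integral_const]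
      rw [intervalIntegral.integral_const_mul]
      rw [show ∫ x in (0:ℝ)..1, x = ((1:ℝ) ^ 2 - 0 ^ 2) / 2 from integral_id]
      norm_num
      ring
    rw [hftc] at hmono
    rw [hrhs] at hmono
    have : Φ (x + h) ≤ Φ x + ⟪G x, h⟫ + κ * N h ^ 2 := by linarith
    simpa [hΦ, hG] using this
end

section
/- For 2 ≤ p < ∞, the norm ‖·‖_p on ℝⁿ is (p−1)-smooth: the function Φ(x) = ‖x‖_p² is continuously differentiable and satisfies Φ(x+h) ≤ Φ(x) + ⟨∇Φ(x), h⟩ + (p−1)Φ(h) for all x, h ∈ ℝⁿ. -/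
open scoped RealInnerProductSpace
open Real Matrix

noncomputable def sphi (p y : ℝ) : ℝ := |y| ^ (p - 2) * y

lemma sphi_zero (p : ℝ) : sphi p 0 = 0 := by simp [sphi]

lemma abs_sphi_le {p : ℝ} (hp : 2 ≤ p) (y : ℝ) : |sphi p y| ≤ |y| ^ (p - 1) := by
  rcases eq_or_ne y 0 with rfl | hy
  · simp [sphi_zero, Real.zero_rpow (by intro h; linarith : p - 1 ≠ 0)]
  · have h0 : (0:ℝ) < |y| := abs_pos.2 hy
    rw [sphi, abs_mul, abs_rpow_of_nonneg (abs_nonneg y), abs_abs]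
    rw [show p - 1 = (p - 2) + 1 by ring, Real.rpow_add h0, Real.rpow_one]

lemma hasDerivAt_sphi {p : ℝ} (hp : 2 ≤ p) (y : ℝ) :
    HasDerivAt (sphi p) ((p - 1) * |y| ^ (p - 2)) y := by
  rcases lt_trichotomy y 0 with hy | rfl | hy
  · have hy' : (0:ℝ) < -y := by linarith
    have h1 : HasDerivAt (fun z : ℝ => (-z) ^ (p - 2) * z)
        ((p - 1) * (-y) ^ (p - 2)) y := by
      have hneg : HasDerivAt (fun z : ℝ => (-z) ^ (p - 2))
          ((p-2) * (-y) ^ (p - 3) * (-1)) y := by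
        have := (Real.hasDerivAt_rpow_const (x := -y) (p := p - 2)
          (Or.inl (ne_of_gt hy'))).comp y (hasDerivAt_neg y)
        simpa [Function.comp_def, show p - 2 - 1 = p - 3 by ring] using this
      have h2 := hneg.mul (hasDerivAt_id y)
      have h3' : (-y) ^ (p-3) * (-y) = (-y) ^ (p-2) := by
        rw [show p - 2 = (p - 3) + 1 by ring, Real.rpow_add hy', Real.rpow_one]
      refine h2.congr_deriv (Eq.symm ?_)
      simp only [id_eq, mul_one]
      rw [show (p-2) * (-y)^(p-3) * (-1) * y + (-y)^(p-2)
          = (p-2) * ((-y)^(p-3) * (-y)) + (-y)^(p-2) from by ring, h3']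
      ring
    have hev : (fun z : ℝ => (-z) ^ (p - 2) * z) =ᶠ[nhds y] sphi p := by
      filter_upwards [Iio_mem_nhds hy] with z hz
      simp [sphi, abs_of_neg (Set.mem_Iio.1 hz)]
    have := h1.congr_of_eventuallyEq hev.symm
    simpa [abs_of_neg hy] using this
  · rcases eq_or_lt_of_le hp with hp2 | hp2
    · have hfun : sphi p = fun z : ℝ => z := by
        funext z; simp [sphi, ← hp2]
    
      rw [hfun, show (p - 1) * |(0:ℝ)| ^ (p - 2) = 1 by
        simp [← hp2]; norm_num]
      exact hasDerivAt_id 0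
    · have key : HasDerivAt (sphi p) 0 0 := by
        rw [hasDerivAt_iff_tendsto_slope]
        apply squeeze_zero_norm (a := fun z => |z| ^ (p - 2))
        · intro z
          rcases eq_or_ne z 0 with rfl | hz
          · simp [slope, Real.zero_rpow (by intro h; linarith : p - 2 ≠ 0), sphi_zero]
          · rw [slope_def_field]
            simp only [sphi_zero, sub_zero]
            rw [sphi, Real.norm_eq_abs, abs_div, abs_mul,
              abs_rpow_of_nonneg (abs_nonneg z), abs_abs, mul_div_assoc,
              div_self (by simpa using hz), mul_one]
        · have h5 := (continuous_abs.tendsto (0:ℝ)).rpow_const (p := p - 2)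
            (Or.inr (by linarith))
          simpa [Real.zero_rpow (by intro h; linarith : p - 2 ≠ 0)] using
            h5.mono_left nhdsWithin_le_nhds
      simpa [Real.zero_rpow (by intro h; linarith : p - 2 ≠ 0)] using key
  · have h1 : HasDerivAt (fun z : ℝ => z ^ (p - 2) * z)
        ((p - 1) * y ^ (p - 2)) y := by
      have h2 := (Real.hasDerivAt_rpow_const (x := y) (p := p - 2)
        (Or.inl (ne_of_gt hy))).mul (hasDerivAt_id y)
      have h3' : y ^ (p-2-1) * y = y ^ (p-2) := by
        rw [show p - 2 = (p - 2 - 1) + 1 by ring, Real.rpow_add hy, Real.rpow_one]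
        ring_nf
      refine h2.congr_deriv (Eq.symm ?_)
      simp only [id_eq, mul_one]
      rw [show (p-2) * y^(p-2-1) * y + y^(p-2)
          = (p-2) * (y^(p-2-1) * y) + y^(p-2) from by ring, h3']
      ring
    have hev : (fun z : ℝ => z ^ (p - 2) * z) =ᶠ[nhds y] sphi p := by
      filter_upwards [Ioi_mem_nhds hy] with z hz
      simp [sphi, abs_of_pos (Set.mem_Ioi.1 hz)]
    have := h1.congr_of_eventuallyEq hev.symm
    simpa [abs_of_pos hy] using this

lemma hasDerivAt_w {p : ℝ} (hp : 2 ≤ p) (y : ℝ) :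
    HasDerivAt (fun z : ℝ => |z| ^ p) (p * sphi p y) y := by
  simpa [sphi, mul_assoc] using hasDerivAt_abs_rpow y (lt_of_lt_of_le one_lt_two hp)

section Multi
variable {n : ℕ} {p : ℝ}

noncomputable def Sf (p : ℝ) {n : ℕ} (x : EuclideanSpace ℝ (Fin n)) : ℝ := ∑ i, |x i| ^ p

lemma Sf_nonneg (p : ℝ) (x : EuclideanSpace ℝ (Fin n)) : 0 ≤ Sf p x :=
  Finset.sum_nonneg fun i _ => Real.rpow_nonneg (abs_nonneg _) _

lemma Sf_zero (hp : 2 ≤ p) : Sf p (0 : EuclideanSpace ℝ (Fin n)) = 0 := by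
  simp [Sf, Real.zero_rpow (by intro h; linarith : p ≠ 0)]

lemma Sf_pos (hp : 2 ≤ p) {x : EuclideanSpace ℝ (Fin n)} (hx : x ≠ 0) : 0 < Sf p x := by
  rcases (Sf_nonneg p x).lt_or_eq with h | h
  · exact h
  · exfalso
    apply hx
    have h2 := (Finset.sum_eq_zero_iff_of_nonneg
      (fun i _ => Real.rpow_nonneg (abs_nonneg (x i)) p)).1 h.symm
    ext i
    have h3 := h2 i (Finset.mem_univ i)
    have h4 : |x i| = 0 := by
      by_contra h5
      have h6 : (0:ℝ) < |x i| := (abs_nonneg _).lt_of_ne (Ne.symm h5)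
      exact absurd h3 (ne_of_gt (Real.rpow_pos_of_pos h6 p))
    simpa using abs_eq_zero.1 h4

lemma abs_coord_le_norm (x : EuclideanSpace ℝ (Fin n)) (i : Fin n) : |x i| ≤ ‖x‖ := by
  rw [EuclideanSpace.norm_eq, ← Real.sqrt_sq_eq_abs]
  apply Real.sqrt_le_sqrt
  have := Finset.single_le_sum (f := fun j => ‖x j‖ ^ 2)
    (fun j _ => by positivity) (Finset.mem_univ i)
  simpa [Real.norm_eq_abs, sq_abs] using this

lemma hasFDerivAt_Sf (hp : 2 ≤ p) (x : EuclideanSpace ℝ (Fin n)) :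
    HasFDerivAt (Sf p (n := n))
      (∑ i, (p * sphi p (x i)) • (EuclideanSpace.proj i : EuclideanSpace ℝ (Fin n) →L[ℝ] ℝ)) x := by
  have h1 : ∀ i : Fin n, HasFDerivAt (fun y : EuclideanSpace ℝ (Fin n) => |y i| ^ p)
      ((p * sphi p (x i)) • (EuclideanSpace.proj i : EuclideanSpace ℝ (Fin n) →L[ℝ] ℝ)) x := by
    intro i
    have := (hasDerivAt_w hp (x i)).comp_hasFDerivAt x
      (EuclideanSpace.proj (𝕜 := ℝ) i).hasFDerivAt
    simpa [Function.comp_def] using this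
  exact HasFDerivAt.fun_sum fun i _ => h1 i

end Multi

section Multi2
variable {n : ℕ} {p : ℝ}

noncomputable def Ff (p : ℝ) {n : ℕ} (x : EuclideanSpace ℝ (Fin n)) : EuclideanSpace ℝ (Fin n) :=
  WithLp.toLp 2 (fun i => 2 * (Sf p x) ^ (2/p - 1) * sphi p (x i))

lemma Ff_apply (x : EuclideanSpace ℝ (Fin n)) (i : Fin n) :
    Ff p x i = 2 * (Sf p x) ^ (2/p - 1) * sphi p (x i) := rfl

lemma Ff_zero (hp : 2 ≤ p) : Ff p (0 : EuclideanSpace ℝ (Fin n)) = 0 := by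
  ext i
  simp [Ff, sphi_zero]

lemma hasGradientAt_Phi (hp : 2 ≤ p) (x : EuclideanSpace ℝ (Fin n)) :
    HasGradientAt (fun y : EuclideanSpace ℝ (Fin n) => (Sf p y) ^ (2/p)) (Ff p x) x := by
  have hp0 : p ≠ 0 := by intro h; linarith
  rcases eq_or_ne x 0 with rfl | hx
  · rw [hasGradientAt_iff_hasFDerivAt, Ff_zero hp, map_zero,
      hasFDerivAt_iff_isLittleO_nhds_zero]
    have hΦ0 : Sf p (0 : EuclideanSpace ℝ (Fin n)) ^ (2/p) = 0 := by
      rw [Sf_zero hp, Real.zero_rpow (by positivity : (2:ℝ)/p ≠ 0)]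
    have hb : ∀ h : EuclideanSpace ℝ (Fin n),
        ‖(Sf p (0 + h)) ^ (2/p) - Sf p (0:EuclideanSpace ℝ (Fin n)) ^ (2/p)
          - (0 : EuclideanSpace ℝ (Fin n) →L[ℝ] ℝ) h‖ ≤ (n : ℝ) ^ (2/p) * (‖h‖ * ‖h‖) := by
      intro h
      rw [hΦ0, zero_add]
      simp only [ContinuousLinearMap.zero_apply, sub_zero, Real.norm_eq_abs]
      rw [abs_of_nonneg (Real.rpow_nonneg (Sf_nonneg p h) _)]
      have h1 : Sf p h ≤ (n : ℝ) * ‖h‖ ^ p := by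
        rw [Sf]
        calc ∑ i, |h i| ^ p ≤ ∑ _i : Fin n, ‖h‖ ^ p := by
              apply Finset.sum_le_sum
              intro i _
              exact Real.rpow_le_rpow (abs_nonneg _) (abs_coord_le_norm h i) (by linarith)
          _ = (n : ℝ) * ‖h‖ ^ p := by simp [mul_comm]
      calc (Sf p h) ^ (2/p) ≤ ((n : ℝ) * ‖h‖ ^ p) ^ (2/p) :=
            Real.rpow_le_rpow (Sf_nonneg p h) h1 (by positivity)
        _ = (n : ℝ) ^ (2/p) * (‖h‖ * ‖h‖) := by
            rw [Real.mul_rpow (by positivity) (by positivity)]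
            congr 1
            rw [← Real.rpow_mul (norm_nonneg h), show p * (2/p) = 2 by field_simp,
              Real.rpow_two, sq, ]

    have h2 : (fun h : EuclideanSpace ℝ (Fin n) => ‖h‖ * ‖h‖) =o[nhds 0] (fun h => h) := by
      calc (fun h : EuclideanSpace ℝ (Fin n) => ‖h‖ * ‖h‖)
          =o[nhds 0] (fun h : EuclideanSpace ℝ (Fin n) => ‖h‖ * 1) := by
            exact (Asymptotics.isBigO_refl (fun h : EuclideanSpace ℝ (Fin n) => ‖h‖)
              (nhds 0)).mul_isLittleO
              ((Asymptotics.isLittleO_const_iff one_ne_zero).2 tendsto_norm_zero)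
        _ =O[nhds 0] (fun h : EuclideanSpace ℝ (Fin n) => h) := by
            simp_rw [mul_one, Asymptotics.isBigO_norm_left
              (f' := fun h : EuclideanSpace ℝ (Fin n) => h)]
            exact Asymptotics.isBigO_refl _ _
    have hb' : ∀ h : EuclideanSpace ℝ (Fin n),
        ‖(Sf p (0 + h)) ^ (2/p) - Sf p (0:EuclideanSpace ℝ (Fin n)) ^ (2/p)
          - (0 : EuclideanSpace ℝ (Fin n) →L[ℝ] ℝ) h‖ ≤ (n : ℝ) ^ (2/p) * ‖(‖h‖ * ‖h‖)‖ := by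
      intro h
      refine (hb h).trans (le_of_eq ?_)
      rw [Real.norm_eq_abs, abs_of_nonneg (mul_nonneg (norm_nonneg h) (norm_nonneg h))]
    exact ((Asymptotics.isBigO_of_le' (c := (n:ℝ) ^ (2/p)) _ hb').trans_isLittleO h2)
  · have hS := Sf_pos hp hx
    have h1 : HasDerivAt (fun s : ℝ => s ^ (2/p)) ((2/p) * (Sf p x) ^ (2/p - 1)) (Sf p x) :=
      Real.hasDerivAt_rpow_const (Or.inl hS.ne')
    have h2 := h1.comp_hasFDerivAt x (hasFDerivAt_Sf hp x)
    rw [hasGradientAt_iff_hasFDerivAt]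
    refine HasFDerivAt.congr_fderiv h2 (Eq.symm ?_)
    apply ContinuousLinearMap.ext
    intro v
    rw [InnerProductSpace.toDual_apply_apply, PiLp.inner_apply]
    simp only [RCLike.inner_apply, starRingEnd_apply, star_trivial,
      ContinuousLinearMap.smul_apply, ContinuousLinearMap.sum_apply,
      ContinuousLinearMap.smul_apply, PiLp.proj_apply, smul_eq_mul]
    rw [Finset.mul_sum]
    apply Finset.sum_congr rfl
    intro i _
    show v i * Ff p x i = 2 / p * Sf p x ^ (2 / p - 1) * (p * sphi p (x i) * v i)
    rw [Ff_apply]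
    field_simp

end Multi2

section Multi3
variable {n : ℕ} {p : ℝ}

lemma continuous_sphi (hp : 2 ≤ p) : Continuous (sphi p) :=
  continuous_iff_continuousAt.2 fun y => (hasDerivAt_sphi hp y).continuousAt

lemma continuous_Sf (hp : 2 ≤ p) : Continuous (Sf p (n := n)) :=
  continuous_iff_continuousAt.2 fun x => (hasFDerivAt_Sf hp x).continuousAt

lemma continuous_coord (i : Fin n) :
    Continuous (fun x : EuclideanSpace ℝ (Fin n) => x i) :=
  (EuclideanSpace.proj (𝕜 := ℝ) i).continuous

lemma abs_Ff_le (hp : 2 ≤ p) (x : EuclideanSpace ℝ (Fin n)) (i : Fin n) :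
    |Ff p x i| ≤ 2 * (Sf p x) ^ (1/p) := by
  have hp0 : (0:ℝ) < p := by linarith
  rcases eq_or_ne x 0 with rfl | hx
  · rw [Ff_zero hp]
    have : |(0 : EuclideanSpace ℝ (Fin n)) i| = 0 := by simp
    simp only [PiLp.zero_apply, abs_zero]
    rw [Sf_zero hp, Real.zero_rpow (by positivity : (1:ℝ)/p ≠ 0)]
    norm_num
  · have hS := Sf_pos hp hx
    rw [Ff_apply, abs_mul, abs_mul]
    have h1 : |sphi p (x i)| ≤ |x i| ^ (p - 1) := abs_sphi_le hp (x i)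
    have h2 : |x i| ^ (p - 1) ≤ (Sf p x) ^ ((p-1)/p) := by
      have h3 : |x i| ≤ (Sf p x) ^ (1/p) := by
        have h4 : |x i| ^ p ≤ Sf p x :=
          Finset.single_le_sum (f := fun j => |x j| ^ p)
            (fun j _ => Real.rpow_nonneg (abs_nonneg _) p) (Finset.mem_univ i)
        calc |x i| = (|x i| ^ p) ^ (1/p) := by
              rw [← Real.rpow_mul (abs_nonneg _), mul_one_div, div_self (ne_of_gt hp0),
                Real.rpow_one]
          _ ≤ (Sf p x) ^ (1/p) :=
              Real.rpow_le_rpow (Real.rpow_nonneg (abs_nonneg _) p) h4 (by positivity)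
      calc |x i| ^ (p-1) ≤ ((Sf p x) ^ (1/p)) ^ (p-1) :=
            Real.rpow_le_rpow (abs_nonneg _) h3 (by linarith)
        _ = (Sf p x) ^ ((p-1)/p) := by
            rw [← Real.rpow_mul (Sf_nonneg p x), one_div, inv_mul_eq_div]
    calc |2| * |(Sf p x) ^ (2/p - 1)| * |sphi p (x i)|
        ≤ |2| * |(Sf p x) ^ (2/p - 1)| * ((Sf p x) ^ ((p-1)/p)) := by
          apply mul_le_mul_of_nonneg_left (h1.trans h2) (by positivity)
      _ = 2 * (Sf p x) ^ (1/p) := by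
          rw [abs_of_nonneg (Real.rpow_nonneg (Sf_nonneg p x) _), abs_two,
            mul_assoc, ← Real.rpow_add hS]
          congr 2
          field_simp
          ring

lemma continuous_Ff (hp : 2 ≤ p) : Continuous (Ff p (n := n)) := by
  have hp0 : (0:ℝ) < p := by linarith
  have hcomp : ∀ i : Fin n, Continuous (fun x : EuclideanSpace ℝ (Fin n) => Ff p x i) := by
    intro i
    rw [continuous_iff_continuousAt]
    intro x
    rcases eq_or_ne x 0 with rfl | hx
    · have h0 : Ff p (0 : EuclideanSpace ℝ (Fin n)) i = 0 := by rw [Ff_zero hp]; simp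
      unfold ContinuousAt
      have h0' : (fun x : EuclideanSpace ℝ (Fin n) => Ff p x i) 0 = 0 := h0
      rw [h0']
      apply squeeze_zero_norm (a := fun x => 2 * (Sf p x) ^ (1/p))
      · intro z
        rw [Real.norm_eq_abs]
        exact abs_Ff_le hp z i
      · have hcs : Filter.Tendsto (Sf p (n := n)) (nhds 0) (nhds 0) := by
          have := (continuous_Sf (n := n) hp).tendsto 0
          rwa [Sf_zero hp] at this
        have hr : Filter.Tendsto (fun s : ℝ => s ^ (1/p)) (nhds 0) (nhds 0) := by
          have := (Real.continuousAt_rpow_const 0 (1/p) (Or.inr (by positivity))).tendsto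
          rwa [Real.zero_rpow (by positivity : (1:ℝ)/p ≠ 0)] at this
        have := (hr.comp hcs).const_mul 2
        simpa using this
    · have hS := Sf_pos hp hx
      simp only [Ff_apply]
      apply ContinuousAt.mul
      apply ContinuousAt.mul continuousAt_const
      · exact (Real.continuousAt_rpow_const _ _ (Or.inl hS.ne')).comp
          ((continuous_Sf hp).continuousAt)
      · exact ((continuous_sphi hp).comp (continuous_coord i)).continuousAt
  have : Continuous (fun x : EuclideanSpace ℝ (Fin n) => (fun i => Ff p x i : Fin n → ℝ)) :=
    continuous_pi hcomp
  exact (PiLp.continuousLinearEquiv 2 ℝ (fun _ : Fin n => ℝ)).symm.continuous.comp this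

lemma contDiff_Phi (hp : 2 ≤ p) :
    ContDiff ℝ 1 (fun y : EuclideanSpace ℝ (Fin n) => (Sf p y) ^ (2/p)) := by
  rw [contDiff_one_iff_fderiv]
  constructor
  · exact fun x => (hasGradientAt_iff_hasFDerivAt.1 (hasGradientAt_Phi hp x)).differentiableAt
  · have heq : (fderiv ℝ (fun y : EuclideanSpace ℝ (Fin n) => (Sf p y) ^ (2/p)))
        = fun x => (InnerProductSpace.toDual ℝ (EuclideanSpace ℝ (Fin n))) (Ff p x) :=
      funext fun x => (hasGradientAt_iff_hasFDerivAt.1 (hasGradientAt_Phi hp x)).fderiv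
    rw [heq]
    exact (InnerProductSpace.toDual ℝ (EuclideanSpace ℝ (Fin n))).continuous.comp
      (continuous_Ff hp)

end Multi3

section OneD
variable {n : ℕ} {p : ℝ}

lemma holder_B (hp : 2 ≤ p) (y h : EuclideanSpace ℝ (Fin n)) :
    ∑ i, |y i| ^ (p-2) * (h i)^2 ≤ (Sf p y) ^ ((p-2)/p) * (Sf p h) ^ (2/p) := by
  rcases eq_or_lt_of_le hp with hp2 | hp2
  · -- p = 2
    subst hp2
    have e : ∀ i : Fin n, |y i| ^ ((2:ℝ)-2) * (h i)^2 = |h i| ^ (2:ℝ) := by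
      intro i
      rw [sub_self, Real.rpow_zero, one_mul, Real.rpow_two, sq_abs]
    rw [Finset.sum_congr rfl fun i _ => e i,
      show ((2:ℝ)-2)/2 = 0 by norm_num, Real.rpow_zero, one_mul,
      show (2:ℝ)/2 = 1 by norm_num, Real.rpow_one]
    exact le_rfl
  · have hpq : Real.HolderConjugate (p/(p-2)) (p/2) := by
      rw [Real.holderConjugate_iff]; constructor
      · rw [lt_div_iff₀ (by linarith)]; linarith
      · field_simp; ring
    have hf : ∀ i ∈ Finset.univ, (0:ℝ) ≤ |y i| ^ (p-2) :=
      fun i _ => Real.rpow_nonneg (abs_nonneg _) _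
    have hg : ∀ i ∈ Finset.univ, (0:ℝ) ≤ (h i)^2 := fun i _ => sq_nonneg _
    have key := Real.inner_le_Lp_mul_Lq_of_nonneg Finset.univ hpq hf hg
    have e1 : ∀ i : Fin n, (|y i| ^ (p-2)) ^ (p/(p-2)) = |y i| ^ p := by
      intro i
      rw [← Real.rpow_mul (abs_nonneg _)]
      congr 1
      rw [mul_comm]
      exact div_mul_cancel₀ p (by linarith : p - 2 ≠ 0)
    have e2 : ∀ i : Fin n, ((h i)^2 : ℝ) ^ (p/2) = |h i| ^ p := by
      intro i
      rw [← sq_abs, ← Real.rpow_two, ← Real.rpow_mul (abs_nonneg _)]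
      congr 1
      field_simp
    rw [Finset.sum_congr rfl (fun i _ => e1 i), Finset.sum_congr rfl (fun i _ => e2 i)] at key
    rw [show 1/(p/(p-2)) = (p-2)/p by field_simp, show 1/(p/2) = 2/p by field_simp] at key
    exact key

lemma antitone_of_deriv_nonpos_except {G G' : ℝ → ℝ} (t₀ : ℝ)
    (hc : Continuous G)
    (hd : ∀ t, t ≠ t₀ → HasDerivAt G (G' t) t)
    (h' : ∀ t, t ≠ t₀ → G' t ≤ 0) : Antitone G := by
  have mk : ∀ s : Set ℝ, Convex ℝ s → interior s ⊆ {t | t ≠ t₀} → AntitoneOn G s := by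
    intro s hs hsub
    apply antitoneOn_of_deriv_nonpos hs hc.continuousOn
    · intro t ht
      exact ((hd t (hsub ht)).differentiableAt).differentiableWithinAt
    · intro t ht
      rw [(hd t (hsub ht)).deriv]
      exact h' t (hsub ht)
  have h1 : AntitoneOn G (Set.Iic t₀) := by
    apply mk _ (convex_Iic t₀)
    rw [interior_Iic]
    intro t ht
    exact ne_of_lt ht
  have h2 : AntitoneOn G (Set.Ici t₀) := by
    apply mk _ (convex_Ici t₀)
    rw [interior_Ici]
    intro t ht
    exact ne_of_gt ht
  intro a b hab
  rcases le_total b t₀ with hb | hb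
  · exact h1 (Set.mem_Iic.2 (hab.trans hb)) (Set.mem_Iic.2 hb) hab
  · rcases le_total t₀ a with ha | ha
    · exact h2 (Set.mem_Ici.2 ha) (Set.mem_Ici.2 (ha.trans hab)) hab
    · calc G b ≤ G t₀ := h2 (Set.mem_Ici.2 le_rfl) (Set.mem_Ici.2 hb) hb
        _ ≤ G a := h1 (Set.mem_Iic.2 ha) (Set.mem_Iic.2 le_rfl) ha

end OneD

section Line
variable {n : ℕ} {p : ℝ}

lemma line_coord (x h : EuclideanSpace ℝ (Fin n)) (t : ℝ) (i : Fin n) :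
    (x + t • h) i = x i + t * h i := by
  simp

noncomputable def Af (p : ℝ) {n : ℕ} (x h : EuclideanSpace ℝ (Fin n)) (t : ℝ) : ℝ :=
  ∑ i, sphi p (x i + t * h i) * h i

noncomputable def Bf (p : ℝ) {n : ℕ} (x h : EuclideanSpace ℝ (Fin n)) (t : ℝ) : ℝ :=
  ∑ i, |x i + t * h i| ^ (p-2) * (h i)^2

lemma hasDerivAt_line (x h : EuclideanSpace ℝ (Fin n)) (t : ℝ) :
    HasDerivAt (fun t : ℝ => x + t • h) h t := by
  simpa using ((hasDerivAt_id t).smul_const h).const_add x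

lemma hasDerivAt_S_line (hp : 2 ≤ p) (x h : EuclideanSpace ℝ (Fin n)) (t : ℝ) :
    HasDerivAt (fun t : ℝ => Sf p (x + t • h)) (p * Af p x h t) t := by
  have hterm : ∀ i : Fin n, HasDerivAt (fun t : ℝ => |x i + t * h i| ^ p)
      (p * sphi p (x i + t * h i) * h i) t := by
    intro i
    have hl : HasDerivAt (fun t : ℝ => x i + t * h i) (h i) t := by
      simpa using ((hasDerivAt_id t).mul_const (h i)).const_add (x i)
    have := (hasDerivAt_w hp (x i + t * h i)).comp t hl
    simpa [Function.comp_def, mul_assoc] using this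
  have hsum := HasDerivAt.fun_sum (u := Finset.univ) (A := fun i (t : ℝ) => |x i + t * h i| ^ p)
    (fun i _ => hterm i)
  have heq : (fun t : ℝ => ∑ i, |x i + t * h i| ^ p) = fun t : ℝ => Sf p (x + t • h) := by
    funext s
    rw [Sf]
    exact Finset.sum_congr rfl fun i _ => by rw [line_coord]
  rw [heq] at hsum
  refine hsum.congr_deriv (Eq.symm ?_)
  rw [Af, Finset.mul_sum]
  exact Finset.sum_congr rfl fun i _ => by ring

lemma hasDerivAt_A_line (hp : 2 ≤ p) (x h : EuclideanSpace ℝ (Fin n)) (t : ℝ) :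
    HasDerivAt (Af p x h) ((p - 1) * Bf p x h t) t := by
  have hterm : ∀ i : Fin n, HasDerivAt (fun t : ℝ => sphi p (x i + t * h i) * h i)
      ((p-1) * (|x i + t * h i| ^ (p-2) * (h i)^2)) t := by
    intro i
    have hl : HasDerivAt (fun t : ℝ => x i + t * h i) (h i) t := by
      simpa using ((hasDerivAt_id t).mul_const (h i)).const_add (x i)
    have := ((hasDerivAt_sphi hp (x i + t * h i)).comp t hl).mul_const (h i)
    refine this.congr_deriv (Eq.symm ?_)
    ring
  have hsum := HasDerivAt.fun_sum (u := Finset.univ) (A := fun i (t : ℝ) => sphi p (x i + t * h i) * h i)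
    (fun i _ => hterm i)
  have : Af p x h = fun t : ℝ => ∑ i, sphi p (x i + t * h i) * h i := rfl
  rw [this]
  refine hsum.congr_deriv (Eq.symm ?_)
  rw [Bf, Finset.mul_sum]

lemma inner_Ff (hp : 2 ≤ p) (y h : EuclideanSpace ℝ (Fin n)) :
    (inner ℝ (Ff p y) h : ℝ) = 2 * (Sf p y) ^ (2/p - 1) * (∑ i, sphi p (y i) * h i) := by
  rw [PiLp.inner_apply]
  simp only [RCLike.inner_apply, starRingEnd_apply, star_trivial]
  rw [Finset.mul_sum]
  exact Finset.sum_congr rfl fun i _ => by rw [Ff_apply]; ring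

lemma hasDerivAt_f_line (hp : 2 ≤ p) (x h : EuclideanSpace ℝ (Fin n)) (t : ℝ) :
    HasDerivAt (fun t : ℝ => (Sf p (x + t • h)) ^ (2/p))
      (2 * (Sf p (x + t • h)) ^ (2/p - 1) * Af p x h t) t := by
  have hF := hasGradientAt_iff_hasFDerivAt.1 (hasGradientAt_Phi hp (x + t • h))
  have hcomp := hF.comp_hasDerivAt t (hasDerivAt_line x h t)
  have : (InnerProductSpace.toDual ℝ (EuclideanSpace ℝ (Fin n))) (Ff p (x + t • h)) h
      = 2 * (Sf p (x + t • h)) ^ (2/p - 1) * Af p x h t := by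
    rw [InnerProductSpace.toDual_apply_apply]
    rw [inner_Ff hp]
    rw [Af]
    congr 1
  rw [this] at hcomp
  exact hcomp

end Line

section SecondDeriv
variable {n : ℕ} {p : ℝ}

lemma hasDerivAt_G (hp : 2 ≤ p) (x h : EuclideanSpace ℝ (Fin n)) (t : ℝ)
    (hy : x + t • h ≠ 0) :
    HasDerivAt (fun s : ℝ => 2 * (Sf p (x + s • h)) ^ (2/p - 1) * Af p x h s)
      (2 * ((2/p - 1) * (Sf p (x + t • h)) ^ (2/p - 2) * (p * Af p x h t)) * Af p x h t
        + 2 * (Sf p (x + t • h)) ^ (2/p - 1) * ((p - 1) * Bf p x h t)) t := by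
  have hS := Sf_pos hp hy
  have hrpow : HasDerivAt (fun s : ℝ => s ^ (2/p - 1))
      ((2/p - 1) * (Sf p (x + t • h)) ^ (2/p - 2)) (Sf p (x + t • h)) := by
    have := Real.hasDerivAt_rpow_const (x := Sf p (x + t • h)) (p := 2/p - 1)
      (Or.inl hS.ne')
    rwa [show 2/p - 1 - 1 = 2/p - 2 by ring] at this
  have hcomp := hrpow.comp t (hasDerivAt_S_line hp x h t)
  have h1 := hcomp.const_mul 2
  have h2 := h1.mul (hasDerivAt_A_line hp x h t)
  exact h2

lemma deriv_G_le (hp : 2 ≤ p) (x h : EuclideanSpace ℝ (Fin n)) (t : ℝ)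
    (hy : x + t • h ≠ 0) :
    2 * ((2/p - 1) * (Sf p (x + t • h)) ^ (2/p - 2) * (p * Af p x h t)) * Af p x h t
        + 2 * (Sf p (x + t • h)) ^ (2/p - 1) * ((p - 1) * Bf p x h t)
      ≤ 2 * (p - 1) * (Sf p h) ^ (2/p) := by
  have hp0 : (0:ℝ) < p := by linarith
  have hS := Sf_pos hp hy
  have hterm1 : 2 * ((2/p - 1) * (Sf p (x + t • h)) ^ (2/p - 2) * (p * Af p x h t)) * Af p x h t
      ≤ 0 := by
    have e : 2 * ((2/p - 1) * (Sf p (x + t • h)) ^ (2/p - 2) * (p * Af p x h t)) * Af p x h t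
        = (2 * p * (2/p - 1)) * ((Sf p (x + t • h)) ^ (2/p - 2) * (Af p x h t)^2) := by
      ring
    rw [e]
    apply mul_nonpos_of_nonpos_of_nonneg
    · have h2p : 2/p - 1 ≤ 0 := by
        rw [sub_nonpos, div_le_one hp0]; exact hp
      nlinarith
    · positivity
  have hB : Bf p x h t ≤ (Sf p (x + t • h)) ^ ((p-2)/p) * (Sf p h) ^ (2/p) := by
    have := holder_B hp (x + t • h) h
    rw [Bf]
    have e : ∀ i : Fin n, |x i + t * h i| ^ (p-2) * (h i)^2
        = |(x + t • h) i| ^ (p-2) * (h i)^2 := fun i => by rw [line_coord]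
    rw [Finset.sum_congr rfl fun i _ => e i]
    exact this
  have hterm2 : 2 * (Sf p (x + t • h)) ^ (2/p - 1) * ((p - 1) * Bf p x h t)
      ≤ 2 * (p - 1) * (Sf p h) ^ (2/p) := by
    calc 2 * (Sf p (x + t • h)) ^ (2/p - 1) * ((p - 1) * Bf p x h t)
        ≤ 2 * (Sf p (x + t • h)) ^ (2/p - 1) *
            ((p - 1) * ((Sf p (x + t • h)) ^ ((p-2)/p) * (Sf p h) ^ (2/p))) := by
          apply mul_le_mul_of_nonneg_left _ (by positivity)
          exact mul_le_mul_of_nonneg_left hB (by linarith)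
      _ = 2 * (p - 1) * ((Sf p (x + t • h)) ^ (2/p - 1) * (Sf p (x + t • h)) ^ ((p-2)/p))
            * (Sf p h) ^ (2/p) := by ring
      _ = 2 * (p - 1) * (Sf p h) ^ (2/p) := by
          rw [← Real.rpow_add hS, show 2/p - 1 + (p-2)/p = 0 by field_simp; ring,
            Real.rpow_zero, mul_one]
  linarith

end SecondDeriv


/-- for `2 ≤ p < ∞` the norm `‖·‖_p` on `ℝⁿ` is `(p-1)`-smooth. -/
theorem stmt_5 {n : ℕ} (p : ℝ) (hp : 2 ≤ p)
    (Φ : EuclideanSpace ℝ (Fin n) → ℝ)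
    (hΦ : ∀ x, Φ x = ((∑ i, |x i| ^ p) ^ (1 / p)) ^ 2) :
    ContDiff ℝ 1 Φ ∧
      ∀ x h, Φ (x + h) ≤ Φ x + ⟪gradient Φ x, h⟫ + (p - 1) * Φ h := by
  have hp0 : (0:ℝ) < p := by linarith
  have hrep : Φ = fun z : EuclideanSpace ℝ (Fin n) => (Sf p z) ^ (2/p) := by
    funext z
    rw [hΦ z]
    have hnn : (0:ℝ) ≤ ∑ i, |z i| ^ p :=
      Finset.sum_nonneg fun i _ => Real.rpow_nonneg (abs_nonneg _) _
    rw [← Real.rpow_natCast ((∑ i, |z i| ^ p) ^ (1/p)) 2,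
      ← Real.rpow_mul hnn, show (1/p) * ((2:ℕ):ℝ) = 2/p by push_cast; ring]
    rfl
  clear hΦ
  subst hrep
  constructor
  · exact contDiff_Phi hp
  · intro x h
    have hgrad : gradient (fun z : EuclideanSpace ℝ (Fin n) => (Sf p z) ^ (2/p)) x = Ff p x :=
      (hasGradientAt_Phi hp x).gradient
    rw [hgrad]
    rcases eq_or_ne h 0 with rfl | hh
    · rw [add_zero, inner_zero_right]
      show (Sf p x) ^ (2/p) ≤ (Sf p x) ^ (2/p) + 0
        + (p - 1) * (Sf p (0 : EuclideanSpace ℝ (Fin n))) ^ (2/p)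
      rw [Sf_zero hp, Real.zero_rpow (by positivity : (2:ℝ)/p ≠ 0)]
      norm_num
    · -- exceptional point
      have hexc : ∃ t₀ : ℝ, ∀ t : ℝ, t ≠ t₀ → x + t • h ≠ 0 := by
        by_cases hex : ∃ t : ℝ, x + t • h = 0
        · obtain ⟨t₀, ht₀⟩ := hex
          refine ⟨t₀, fun t ht hzero => ht ?_⟩
          have : (t - t₀) • h = 0 := by
            have := sub_eq_zero.2 (hzero.trans ht₀.symm)
            rwa [add_sub_add_left_eq_sub, ← sub_smul] at this
          rcases smul_eq_zero.1 this with h1 | h1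
          · exact sub_eq_zero.1 h1
          · exact absurd h1 hh
        · exact ⟨0, fun t _ hz => hex ⟨t, hz⟩⟩
      obtain ⟨t₀, ht₀⟩ := hexc
      show (Sf p (x + h)) ^ (2/p) ≤ (Sf p x) ^ (2/p) + (inner ℝ (Ff p x) h : ℝ)
        + (p - 1) * (Sf p h) ^ (2/p)
      set K : ℝ := (p - 1) * (Sf p h) ^ (2/p) with hK
      set G : ℝ → ℝ := fun s => 2 * (Sf p (x + s • h)) ^ (2/p - 1) * Af p x h s with hG
      have hGf : ∀ t : ℝ, HasDerivAt (fun s : ℝ => (Sf p (x + s • h)) ^ (2/p)) (G t) t :=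
        fun t => hasDerivAt_f_line hp x h t
      have hq : ∀ t : ℝ, HasDerivAt
          (fun s : ℝ => (Sf p (x + s • h)) ^ (2/p) - K * s^2) (G t - K * (2*t)) t := by
        intro t
        have hpow : HasDerivAt (fun s : ℝ => K * s^2) (K * (2*t)) t := by
          simpa [pow_one] using (hasDerivAt_pow 2 t).const_mul K
        exact (hGf t).sub hpow
      have hGcont : Continuous G := by
        have he : G = fun t : ℝ => (inner ℝ (Ff p (x + t • h)) h : ℝ) := by
          funext t
          simp only [hG]
          rw [inner_Ff hp]
          congr 1
        rw [he]
        have hline : Continuous (fun t : ℝ => x + t • h) :=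
          continuous_const.add (continuous_id.smul continuous_const)
        exact Continuous.inner ((continuous_Ff hp).comp hline) continuous_const
      have hanti : Antitone (fun t : ℝ => G t - K * (2*t)) := by
        apply antitone_of_deriv_nonpos_except (G' := fun t =>
          (2 * ((2/p - 1) * (Sf p (x + t • h)) ^ (2/p - 2) * (p * Af p x h t)) * Af p x h t
            + 2 * (Sf p (x + t • h)) ^ (2/p - 1) * ((p - 1) * Bf p x h t)) - K * 2) t₀
        · exact hGcont.sub (continuous_const.mul (continuous_const.mul continuous_id))
        · intro t ht
          have hlin : HasDerivAt (fun s : ℝ => K * (2*s)) (K * 2) t := by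
            simpa using ((hasDerivAt_id t).const_mul (2:ℝ)).const_mul K
          exact (hasDerivAt_G hp x h t (ht₀ t ht)).sub hlin
        · intro t ht
          have := deriv_G_le hp x h t (ht₀ t ht)
          rw [hK]
          linarith
      obtain ⟨c, hc, hceq⟩ := exists_hasDerivAt_eq_slope
        (fun s : ℝ => (Sf p (x + s • h)) ^ (2/p) - K * s^2)
        (fun t => G t - K * (2*t)) one_pos
        (by
          have : Continuous (fun s : ℝ => (Sf p (x + s • h)) ^ (2/p) - K * s^2) :=
            continuous_iff_continuousAt.2 fun t => (hq t).continuousAt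
          exact this.continuousOn)
        (fun t _ => hq t)
      have hq1 : (Sf p (x + (1:ℝ) • h)) ^ (2/p) - K * (1:ℝ)^2 = (Sf p (x + h)) ^ (2/p) - K := by
        rw [one_smul, one_pow, mul_one]
      have hq0 : (Sf p (x + (0:ℝ) • h)) ^ (2/p) - K * (0:ℝ)^2 = (Sf p x) ^ (2/p) := by
        rw [zero_smul, add_zero]
        norm_num
      have hG0 : G 0 = (inner ℝ (Ff p x) h : ℝ) := by
        simp only [hG]
        rw [show x + (0:ℝ) • h = x by rw [zero_smul, add_zero], inner_Ff hp]
        congr 1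
        simp [Af]
      have hstep : (((Sf p (x + (1:ℝ) • h)) ^ (2/p) - K * (1:ℝ)^2)
          - ((Sf p (x + (0:ℝ) • h)) ^ (2/p) - K * (0:ℝ)^2)) / (1 - 0)
          ≤ G 0 - K * (2*0) := by
        rw [← hceq]
        exact hanti (le_of_lt hc.1)
      rw [hq1, hq0, show ((1:ℝ) - 0) = 1 by norm_num, div_one, hG0] at hstep
      rw [hK] at hstep
      linarith
end
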